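/- In the algorithm for Sp(2n): given a symplectic partition λ of 2n with only even parts and ε : ℕ → {±1} with ε(i) = ε_{λᵢ}, define 𝒪 = {i ≥ 2 : ε(i) = ε(i−1)} ∪ {1}, J^η = {i : (−1)^{i+1}ε(i) = η}, J̃^η = J^η ∖ 𝒪, and λ̄₁ = Σ_{i∈𝒪} λᵢ − 2|J̃^{−ε(1)}|. Then λ̄₁ is a non-negative even integer, and the partition λ' = (λ_j : j ∈ J̃^{ε(1)}) ⊔ (λ_j + 2 : j ∈ J̃^{−ε(1)}) is a symplectic partition of 2n − λ̄₁ with only even parts, and 2n − λ̄₁ < 2n when n > 0. -/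

import Mathlib

noncomputable section

/-- The set `𝒪 = {1} ∪ {i : ε(i) = ε(i−1)}` (0-indexed); under the standing hypotheses
every index `> t` lies in `𝒪`, so we record its intersection with `{0,…,t}`. -/
def OFin (eps : ℕ → ℤ) (t : ℕ) : Finset ℕ :=
  (Finset.range (t + 1)).filter fun i => i = 0 ∨ eps i = eps (i - 1)

/-- The set `J̃^η = J^η ∖ 𝒪` where `J^η = {i : (−1)^{i+1} ε(i) = η}` (0-indexed, so the
sign is `(−1)^i`); it is contained in `{0,…,t}`. -/
def JtildeSp (eps : ℕ → ℤ) (t : ℕ) (η : ℤ) : Finset ℕ :=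
  (Finset.range (t + 1)).filter fun i =>
    (-1) ^ i * eps i = η ∧ ¬(i = 0 ∨ eps i = eps (i - 1))

/-- `λ̄₁ = Σ_{i∈𝒪} λᵢ − 2|J̃^{−ε(1)}|`. -/
def lbarSp (lam : ℕ → ℕ) (eps : ℕ → ℤ) (t : ℕ) : ℤ :=
  (∑ i ∈ OFin eps t, (lam i : ℤ)) - 2 * (JtildeSp eps t (-(eps 0))).card

/-- Well-definedness and termination of Waldspurger's algorithm for `Sp(2n)`: given a
symplectic partition `λ` of `2n` with only even parts and signs `ε` constant on equal
parts, `λ̄₁` is a non-negative even integer, and the partition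
`λ' = (λ_j : j ∈ J̃^{ε(1)}) ⊔ (λ_j + 2 : j ∈ J̃^{−ε(1)})` is a symplectic partition of
`2n − λ̄₁` with only even parts; moreover `2n − λ̄₁ < 2n` when `n > 0`. -/
private lemma count_getD (L : List ℕ) (m : ℕ) :
    ((Finset.range L.length).filter fun i => L.getD i 0 = m).card = L.count m := by
  induction L with
  | nil => simp
  | cons a L ih =>
    rw [Finset.card_filter] at ih ⊢
    rw [List.length_cons, Finset.sum_range_succ']
    simp only [List.getD_cons_succ, List.getD_cons_zero]
    rw [ih, List.count_cons]
    by_cases h : a = m <;> simp [h]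

private lemma sum_getD (L : List ℕ) :
    ∑ i ∈ Finset.range L.length, L.getD i 0 = L.sum := by
  induction L with
  | nil => simp
  | cons a L ih =>
    rw [List.length_cons, Finset.sum_range_succ']
    simp only [List.getD_cons_succ, List.getD_cons_zero]
    rw [ih, List.sum_cons]
    omega

private lemma exists_g (M : Multiset ℕ) (hM : ∀ x ∈ M, Even x) :
    ∃ g : ℕ → ℕ, Antitone g ∧
      (∀ m : ℕ, m ≠ 0 → {i : ℕ | g i = m}.ncard = M.count m) ∧
      (∀ i, g i ≠ 0 → Even (g i)) ∧
      ∃ t' : ℕ, (∀ i, t' ≤ i → g i = 0) ∧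
        (∑ i ∈ Finset.range t', (g i : ℤ)) = (M.sum : ℤ) := by
  classical
  set M' := M.filter (fun x => x ≠ 0) with hM'
  set L := M'.sort (· ≥ ·) with hL
  have hsorted : L.Pairwise (· ≥ ·) := Multiset.pairwise_sort _ _
  have hcoe : (↑L : Multiset ℕ) = M' := Multiset.sort_eq _ _
  have hmemL : ∀ x ∈ L, x ∈ M ∧ x ≠ 0 := by
    intro x hx
    rw [hL, Multiset.mem_sort, hM', Multiset.mem_filter] at hx
    exact hx
  refine ⟨fun i => L.getD i 0, ?_, ?_, ?_, L.length, ?_, ?_⟩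
  · intro i j hij
    rcases lt_or_ge j L.length with hj | hj
    · have hi : i < L.length := lt_of_le_of_lt hij hj
      rcases eq_or_lt_of_le hij with rfl | hlt
      · exact le_refl _
      · simp only [List.getD_eq_get _ _ ⟨i, hi⟩, List.getD_eq_get _ _ ⟨j, hj⟩]
        exact hsorted.rel_get_of_lt (a := ⟨i, hi⟩) (b := ⟨j, hj⟩) (by exact hlt)
    · simp only [List.getD_eq_default _ _ hj]
      exact Nat.zero_le _
  · intro m hm
    have hset : {i : ℕ | L.getD i 0 = m}
        = ↑((Finset.range L.length).filter fun i => L.getD i 0 = m) := by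
      ext i
      simp only [Finset.coe_filter, Set.mem_setOf_eq, Finset.mem_range]
      constructor
      · intro h
        refine ⟨?_, h⟩
        by_contra hlen
        rw [List.getD_eq_default _ _ (le_of_not_gt hlen)] at h
        exact hm h.symm
      · exact fun h => h.2
    rw [hset, Set.ncard_coe_finset, count_getD]
    rw [← Multiset.coe_count, hcoe, hM', Multiset.count_filter, if_pos hm]
  · intro i hi
    show Even (L.getD i 0)
    rcases lt_or_ge i L.length with h | h
    · rw [List.getD_eq_get _ _ ⟨i, h⟩]
      exact (hM _ (hmemL _ (List.get_mem L ⟨i, h⟩)).1)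
    · have hi' : L.getD i 0 ≠ 0 := hi
      rw [List.getD_eq_default _ _ h] at hi'
      exact absurd rfl hi'
  · intro i h
    exact List.getD_eq_default _ _ h
  · have h1 : ∑ i ∈ Finset.range L.length, ((L.getD i 0 : ℕ) : ℤ)
        = ((∑ i ∈ Finset.range L.length, L.getD i 0 : ℕ) : ℤ) := by
      push_cast; rfl
    rw [h1, sum_getD]
    congr 1
    have : L.sum = M'.sum := by rw [← hcoe]; rfl
    rw [this]
    have := Multiset.sum_filter_add_sum_filter_not (s := M) (fun x => x ≠ 0)
    have hz : (M.filter (fun x => ¬ x ≠ 0)).sum = 0 :=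
      Multiset.sum_eq_zero (fun x hx => by
        have := (Multiset.mem_filter.mp hx).2; omega)
    rw [← hM'] at this
    omega
theorem stmt16 (n t : ℕ) (lam : ℕ → ℕ) (eps : ℕ → ℤ)
    (hant : Antitone lam) (hsupp : ∀ i, lam i ≠ 0 ↔ i < t)
    (hsum : ∑ i ∈ Finset.range t, lam i = 2 * n)
    (heven : ∀ i, lam i ≠ 0 → Even (lam i))
    (heps : ∀ i, eps i = 1 ∨ eps i = -1)
    (hconst : ∀ i j, lam i = lam j → eps i = eps j) :
    0 ≤ lbarSp lam eps t ∧ Even (lbarSp lam eps t) ∧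
    (0 < n → 0 < lbarSp lam eps t) ∧
    ∃ g : ℕ → ℕ, Antitone g ∧
      (∀ m : ℕ, m ≠ 0 → {i : ℕ | g i = m}.ncard =
        ((JtildeSp eps t (eps 0)).filter fun j => lam j = m).card +
        ((JtildeSp eps t (-(eps 0))).filter fun j => lam j + 2 = m).card) ∧
      (∀ i, g i ≠ 0 → Even (g i)) ∧
      (∀ m : ℕ, Odd m → Even ({i : ℕ | g i = m}.ncard)) ∧
      ∃ t' : ℕ, (∀ i, t' ≤ i → g i = 0) ∧
        (∑ i ∈ Finset.range t', (g i : ℤ)) = 2 * (n : ℤ) - lbarSp lam eps t := by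
  classical
  -- basic facts
  have hlamt : lam t = 0 := by have := hsupp t; omega
  have hflip : ∀ k, k ≠ 0 → k ≤ t → eps k ≠ eps (k-1) → lam k + 2 ≤ lam (k-1) := by
    intro k hk0 hkt hne
    have h1 : lam k ≠ lam (k-1) := fun h => hne (hconst _ _ h)
    have h2 : lam k ≤ lam (k-1) := hant (by omega)
    have h3 : lam k < lam (k-1) := lt_of_le_of_ne h2 h1
    have h4 : Even (lam (k-1)) := heven _ (by omega)
    have h5 : Even (lam k) := by
      by_cases h : lam k = 0
      · simp [h]
      · exact heven _ h
    obtain ⟨a, ha⟩ := h4; obtain ⟨b, hb⟩ := h5; omega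
  set c : ℕ → ℤ := fun i => if i = 0 ∨ eps i = eps (i-1) then (lam i : ℤ)
      else if (-1)^i * eps i = -(eps 0) then -2 else 0 with hc
  have hlbar : lbarSp lam eps t = ∑ i ∈ Finset.range (t+1), c i := by
    rw [lbarSp, OFin, JtildeSp, Finset.sum_filter, Finset.card_filter]
    push_cast
    rw [Finset.mul_sum, ← Finset.sum_sub_distrib]
    refine Finset.sum_congr rfl fun i _ => ?_
    by_cases hO : i = 0 ∨ eps i = eps (i-1)
    · simp [hc, hO]
    · by_cases hs : (-1:ℤ)^i * eps i = -(eps 0) <;> simp [hc, hO, hs]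
  have hpow : ∀ k : ℕ, k ≠ 0 → (-1:ℤ)^k = -(-1)^(k-1) := by
    intro k hk
    have h : k - 1 + 1 = k := by omega
    have h2 : (-1:ℤ)^(k-1+1) = -(-1)^(k-1) := by rw [pow_succ]; ring
    rw [h] at h2
    exact h2
  have hinv : 1 ≤ t → ∀ k, 1 ≤ k → k ≤ t + 1 →
      (if (-1:ℤ)^(k-1) * eps (k-1) = -(eps 0) then (lam (k-1) : ℤ) else 0) + 2
        ≤ ∑ i ∈ Finset.range k, c i := by
    intro ht k
    induction k with
    | zero => omega
    | succ k ih =>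
      intro _ hk1
      simp only [Nat.add_sub_cancel]
      rcases Nat.eq_zero_or_pos k with rfl | hk
      · simp only [zero_add, Finset.sum_range_one]
        have hc0 : c 0 = (lam 0 : ℤ) := by simp [hc]
        have h0 : ¬((-1:ℤ)^0 * eps 0 = -(eps 0)) := by
          rcases heps 0 with h | h <;> simp [h] <;> omega
        rw [if_neg h0, hc0]
        have h1 : lam 0 ≠ 0 := (hsupp 0).mpr ht
        obtain ⟨a, ha⟩ := heven 0 h1
        omega
      · have hkt : k ≤ t := by omega
        have IH := ih (by omega) (by omega)
        rw [Finset.sum_range_succ]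
        have hge0 : (0:ℤ) ≤ if (-1:ℤ)^(k-1) * eps (k-1) = -(eps 0)
            then (lam (k-1) : ℤ) else 0 := by positivity
        by_cases hO : k = 0 ∨ eps k = eps (k-1)
        · have hck : c k = (lam k : ℤ) := by simp only [hc]; rw [if_pos hO]
          rw [hck]
          by_cases hs : (-1:ℤ)^k * eps k = -(eps 0)
          · rw [if_pos hs]; linarith
          · rw [if_neg hs]
            have : (0:ℤ) ≤ (lam k : ℤ) := by positivity
            linarith
        · have hne0 : k ≠ 0 := by omega
          have hflipk : eps k ≠ eps (k-1) := fun h => hO (Or.inr h)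
          have heq : eps k = -eps (k-1) := by
            rcases heps k with h | h <;> rcases heps (k-1) with h' | h' <;>
              rw [h, h'] at hflipk ⊢ <;> omega
          have hsk : (-1:ℤ)^k * eps k = (-1:ℤ)^(k-1) * eps (k-1) := by
            rw [hpow k hne0, heq]; ring
          by_cases hs : (-1:ℤ)^k * eps k = -(eps 0)
          · have hck : c k = -2 := by simp only [hc]; rw [if_neg hO, if_pos hs]
            rw [if_pos hs, hck]
            rw [if_pos (hsk ▸ hs)] at IH
            have hfl := hflip k hne0 hkt hflipk
            push_cast at IH ⊢
            omega
          · have hck : c k = 0 := by simp only [hc]; rw [if_neg hO, if_neg hs]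
            rw [if_neg hs, hck]
            rw [if_neg (hsk ▸ hs)] at IH
            linarith
  -- scalar claims
  have h2le : 1 ≤ t → 2 ≤ lbarSp lam eps t := by
    intro ht
    have h := hinv ht (t+1) (by omega) le_rfl
    rw [hlbar]
    have hge0 : (0:ℤ) ≤ if (-1:ℤ)^(t+1-1) * eps (t+1-1) = -(eps 0)
        then (lam (t+1-1) : ℤ) else 0 := by positivity
    linarith
  have ht0 : t = 0 → lbarSp lam eps t = 0 := by
    intro h; subst h
    have hl0 : lam 0 = 0 := by have := hsupp 0; omega
    rw [lbarSp, OFin, JtildeSp, Finset.range_one]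
    simp [hl0, Finset.filter_singleton]
  have h0le : 0 ≤ lbarSp lam eps t := by
    rcases Nat.eq_zero_or_pos t with h | h
    · rw [ht0 h]
    · linarith [h2le h]
  have hevenl : Even (lbarSp lam eps t) := by
    have h2 : (2:ℤ) ∣ ∑ i ∈ OFin eps t, (lam i : ℤ) := by
      refine Finset.dvd_sum fun i _ => ?_
      by_cases h : lam i = 0
      · simp [h]
      · obtain ⟨a, ha⟩ := heven i h
        exact ⟨a, by push_cast [ha]; ring⟩
    obtain ⟨a, ha⟩ := h2
    exact ⟨a - (JtildeSp eps t (-(eps 0))).card, by rw [lbarSp, ha]; ring⟩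
  have hpos : 0 < n → 0 < lbarSp lam eps t := by
    intro hn
    have ht : 1 ≤ t := by
      by_contra h
      have : t = 0 := by omega
      subst this
      simp at hsum
      omega
    linarith [h2le ht]
  -- the partition of range (t+1)
  have hdisjO : ∀ η, Disjoint (OFin eps t) (JtildeSp eps t η) := by
    intro η
    rw [Finset.disjoint_left]
    intro a ha hb
    rw [OFin, Finset.mem_filter] at ha
    rw [JtildeSp, Finset.mem_filter] at hb
    exact hb.2.2 ha.2
  have hdisjJ : Disjoint (JtildeSp eps t (eps 0)) (JtildeSp eps t (-(eps 0))) := by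
    rw [Finset.disjoint_left]
    intro a ha hb
    rw [JtildeSp, Finset.mem_filter] at ha hb
    have h1 := ha.2.1
    have h2 := hb.2.1
    rcases heps 0 with h | h <;> rw [h] at h1 h2 <;> omega
  have hunion : OFin eps t ∪ (JtildeSp eps t (eps 0) ∪ JtildeSp eps t (-(eps 0)))
      = Finset.range (t+1) := by
    ext i
    simp only [Finset.mem_union, OFin, JtildeSp, Finset.mem_filter]
    constructor
    · rintro (h | h | h) <;> exact h.1
    · intro hi
      by_cases hO : i = 0 ∨ eps i = eps (i-1)
      · exact Or.inl ⟨hi, hO⟩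
      · have hs1 : (-1:ℤ)^i * eps i = eps 0 ∨ (-1:ℤ)^i * eps i = -(eps 0) := by
          rcases Nat.even_or_odd i with he | ho
          · rw [he.neg_one_pow]
            rcases heps i with h | h <;> rcases heps 0 with h0 | h0 <;>
              rw [h, h0] <;> norm_num
          · rw [ho.neg_one_pow]
            rcases heps i with h | h <;> rcases heps 0 with h0 | h0 <;>
              rw [h, h0] <;> norm_num
        rcases hs1 with h | h
        · exact Or.inr (Or.inl ⟨hi, h, hO⟩)
        · exact Or.inr (Or.inr ⟨hi, h, hO⟩)
  have hsum3 : ∑ i ∈ Finset.range (t+1), lam i = (∑ i ∈ OFin eps t, lam i)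
      + ((∑ i ∈ JtildeSp eps t (eps 0), lam i)
        + ∑ i ∈ JtildeSp eps t (-(eps 0)), lam i) := by
    rw [← hunion, Finset.sum_union (Finset.disjoint_union_right.mpr ⟨hdisjO _, hdisjO _⟩),
      Finset.sum_union hdisjJ]
  have hsum4 : ∑ i ∈ Finset.range (t+1), lam i = 2*n := by
    rw [Finset.sum_range_succ, hsum, hlamt]
    omega
  refine ⟨h0le, hevenl, hpos, ?_⟩
  -- the multiset of new parts
  obtain ⟨g, hg1, hg2, hg3, t', hg4, hg5⟩ := exists_g
      ((JtildeSp eps t (eps 0)).val.map lam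
        + (JtildeSp eps t (-(eps 0))).val.map (fun j => lam j + 2)) (by
    intro x hx
    rw [Multiset.mem_add] at hx
    rcases hx with hx | hx <;> rw [Multiset.mem_map] at hx <;>
      obtain ⟨j, _, rfl⟩ := hx
    · by_cases h : lam j = 0
      · simp [h]
      · exact heven j h
    · by_cases h : lam j = 0
      · simp [h]
      · obtain ⟨a, ha⟩ := heven j h
        exact ⟨a + 1, by omega⟩)
  have ecount : ∀ (s : Finset ℕ) (f : ℕ → ℕ) (m : ℕ),
      Multiset.count m (s.val.map f) = (s.filter fun j => f j = m).card := by
    intro s f m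
    rw [Multiset.count_map]
    show Multiset.card _ = Multiset.card _
    congr 1
    rw [Finset.filter_val]
    exact Multiset.filter_congr (fun x _ => eq_comm)
  refine ⟨g, hg1, ?_, hg3, ?_, t', hg4, ?_⟩
  · intro m hm
    rw [hg2 m hm, Multiset.count_add, ecount, ecount]
  · intro m hmodd
    have hm0 : m ≠ 0 := by rintro rfl; simp at hmodd
    have : {i : ℕ | g i = m} = ∅ := by
      ext i
      simp only [Set.mem_setOf_eq, Set.mem_empty_iff_false, iff_false]
      intro h
      have : Even (g i) := hg3 i (by rw [h]; exact hm0)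
      rw [h] at this
      exact (Nat.not_even_iff_odd.mpr hmodd) this
    rw [this]
    simp
  · rw [hg5]
    have hmsum : ((JtildeSp eps t (eps 0)).val.map lam
        + (JtildeSp eps t (-(eps 0))).val.map (fun j => lam j + 2)).sum
        = (∑ i ∈ JtildeSp eps t (eps 0), lam i)
          + ((∑ i ∈ JtildeSp eps t (-(eps 0)), lam i)
            + 2 * (JtildeSp eps t (-(eps 0))).card) := by
      rw [Multiset.sum_add]
      have e1 : (Multiset.map lam (JtildeSp eps t (eps 0)).val).sum
          = ∑ i ∈ JtildeSp eps t (eps 0), lam i := rfl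
      have e2 : (Multiset.map (fun j => lam j + 2) (JtildeSp eps t (-(eps 0))).val).sum
          = ∑ i ∈ JtildeSp eps t (-(eps 0)), (lam i + 2) := rfl
      rw [e1, e2, Finset.sum_add_distrib, Finset.sum_const, smul_eq_mul]
      ring
    rw [hmsum, lbarSp]
    have h3 := congrArg (Nat.cast : ℕ → ℤ) hsum3
    have h4 := congrArg (Nat.cast : ℕ → ℤ) hsum4
    push_cast at h3 h4 ⊢
    linarith [h3, h4]
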